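/- Every geometrically irreducible finite-dimensional algebra A over an algebraically closed field is weakly triangular, i.e., the Gabriel quiver of A contains no oriented cycle of positive degree. -/

import Mathlib

/-!
Formalization of a statement from:
"Algebras with irreducible module varieties: two-vertex case completed"
-/

universe u v

open Quiver

noncomputable section

/-- The Zariski topology on the affine coordinate space `ι → k`: it is generated by the
basic open sets `{x | p(x) ≠ 0}` for multivariate polynomials `p`. -/
def zariskiTop (k : Type u) [CommSemiring k] (ι : Type v) : TopologicalSpace (ι → k) :=
  TopologicalSpace.generateFrom
    {U | ∃ p : MvPolynomial ι k, U = {x | MvPolynomial.eval x p ≠ 0}}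

/-- The Zariski topology on the module variety `mod_A(n)` consisting of the `k`-algebra
homomorphisms `A → M_{n×n}(k)`: the topology induced from the Zariski topology of the
affine space via the coordinates `f ↦ (f a)_{i,j}`. -/
def modVarTop (k : Type u) [Field k] (A : Type v) [Ring A] [Algebra k A] (n : ℕ) :
    TopologicalSpace (A →ₐ[k] Matrix (Fin n) (Fin n) k) :=
  (zariskiTop k (A × Fin n × Fin n)).induced fun f x => f x.1 x.2.1 x.2.2

/-- A `k`-algebra `A` is geometrically irreducible if, for every `n ∈ ℕ`, every connected
component of the module variety `mod_A(n)` is irreducible. -/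
def GeometricallyIrreducible (k : Type u) [Field k] (A : Type v) [Ring A] [Algebra k A] :
    Prop :=
  ∀ (n : ℕ) (f : A →ₐ[k] Matrix (Fin n) (Fin n) k),
    @IsIrreducible _ (modVarTop k A n) (@connectedComponent _ (modVarTop k A n) f)

section QuiverRep

variable (k : Type u) [Field k] (V : Type) [Quiver.{0} V]

/-- The space of representations of the quiver `V` with dimension vector `d`:
a matrix of size `d b × d a` for every arrow `a ⟶ b`. -/
def RepM (d : V → ℕ) : Type u :=
  ∀ a b : V, (a ⟶ b) → Matrix (Fin (d b)) (Fin (d a)) k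

variable {k V}

/-- Evaluation of a representation on a path: the product of the matrices attached to
the arrows of the path. -/
def evalPath {d : V → ℕ} (M : RepM k V d) :
    ∀ {a b : V}, Path a b → Matrix (Fin (d b)) (Fin (d a)) k
  | _, _, Path.nil => 1
  | _, _, Path.cons p α => M _ _ α * evalPath M p

variable (k V)

/-- A relation of the quiver `V` from `a` to `b`: a `k`-linear combination of paths from
`a` to `b`, all of length at least `2`. -/
structure RelData (a b : V) : Type u where
  coeff : Path a b →₀ k
  len : ∀ p ∈ coeff.support, 2 ≤ p.length

/-- The type of relations of the quiver `V` (with arbitrary endpoints: the first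
component is the starting vertex, the second one the terminating vertex). -/
def Rels : Type u := (a : V) × (b : V) × RelData k V a b

variable {k V}

/-- Evaluation of a relation on a representation. -/
def relEval {d : V → ℕ} (M : RepM k V d) {a b : V} (r : RelData k V a b) :
    Matrix (Fin (d b)) (Fin (d a)) k :=
  r.coeff.sum fun p c => c • evalPath M p

/-- The degree of a path: the number of its arrows which are not loops. -/
def pathDeg [DecidableEq V] : ∀ {a b : V}, Path a b → ℕ
  | _, _, Path.nil => 0
  | _, c, Path.cons (b := b) p _ => pathDeg p + (if b = c then 0 else 1)

/-- The degree of a relation: the minimum of the degrees of the paths occurring in it. -/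
def relDeg [DecidableEq V] {a b : V} (r : RelData k V a b) : ℕ :=
  sInf (pathDeg '' (r.coeff.support : Set (Path a b)))

variable (k V)

/-- The representation variety `rep(d)` of the bound quiver `(V, R)`: the representations
annihilating all the relations in `R`. -/
def repSet (R : Set (Rels k V)) (d : V → ℕ) : Set (RepM k V d) :=
  {M | ∀ r ∈ R, relEval M r.2.2 = 0}

/-- The index type for the affine coordinates on the space of representations. -/
def RepIdx (d : V → ℕ) : Type :=
  (a : V) × (b : V) × ((a ⟶ b) × (Fin (d b) × Fin (d a)))

variable {k V}

/-- The affine coordinates on the space of representations. -/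
def repCoords {d : V → ℕ} (M : RepM k V d) : RepIdx V d → k :=
  fun x => M x.1 x.2.1 x.2.2.1 x.2.2.2.1 x.2.2.2.2

variable (k V)

/-- The Zariski topology on the space of representations. -/
def repTop (d : V → ℕ) : TopologicalSpace (RepM k V d) :=
  (zariskiTop k _).induced repCoords

end QuiverRep

section PathAlgebra

variable (k : Type u) [Field k] (V : Type) [Quiver.{0} V]

/-- Generators of the path algebra of the quiver `V`: one generator for every vertex (its
trivial path) and one for every arrow. -/
inductive PGen : Type
  | vert (a : V)
  | arr {a b : V} (α : a ⟶ b)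

open FreeAlgebra in
/-- The defining relations of the path algebra of a quiver: the trivial paths form a
complete set of orthogonal idempotents summing to `1`, and the trivial paths act as
identities on the adjacent arrows. -/
inductive PARel : FreeAlgebra k (PGen V) → FreeAlgebra k (PGen V) → Prop
  | idem (a : V) : PARel (ι k (PGen.vert a) * ι k (PGen.vert a)) (ι k (PGen.vert a))
  | orth (a b : V) (h : a ≠ b) : PARel (ι k (PGen.vert a) * ι k (PGen.vert b)) 0
  | vsum : PARel (∑ᶠ a : V, ι k (PGen.vert a)) 1
  | arrL {a b : V} (α : a ⟶ b) :
      PARel (ι k (PGen.vert b) * ι k (PGen.arr α)) (ι k (PGen.arr α))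
  | arrR {a b : V} (α : a ⟶ b) :
      PARel (ι k (PGen.arr α) * ι k (PGen.vert a)) (ι k (PGen.arr α))

/-- The path algebra of the quiver `V` over `k`. -/
abbrev PathAlg : Type u := RingQuot (PARel k V)

/-- The canonical projection from the free algebra onto the path algebra. -/
def paMk : FreeAlgebra k (PGen V) →ₐ[k] PathAlg k V :=
  RingQuot.mkAlgHom k (PARel k V)

/-- The element of the path algebra determined by a path of the quiver. -/
def pathElem : ∀ {a b : V}, Path a b → PathAlg k V
  | a, _, Path.nil => paMk k V (FreeAlgebra.ι k (PGen.vert a))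
  | _, _, Path.cons p α => paMk k V (FreeAlgebra.ι k (PGen.arr α)) * pathElem p

/-- The element of the path algebra determined by a relation. -/
def relElem {a b : V} (r : RelData k V a b) : PathAlg k V :=
  r.coeff.sum fun p c => c • pathElem k V p

/-- The algebra of the bound quiver `(V, R)`: the quotient of the path algebra of `V` by
the two-sided ideal generated by the relations in `R`. -/
abbrev BoundAlg (R : Set (Rels k V)) : Type u :=
  RingQuot (fun x y : PathAlg k V => (∃ r ∈ R, x = relElem k V r.2.2) ∧ y = 0)

/-- The canonical projection from the path algebra onto the algebra of a bound quiver. -/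
def baMk (R : Set (Rels k V)) : PathAlg k V →ₐ[k] BoundAlg k V R :=
  RingQuot.mkAlgHom k _

/-- The pair `(V, R)` is a bound quiver: all sufficiently long paths lie in the ideal
generated by the relations, i.e. their images vanish in `BoundAlg k V R`.  (Together
with the finiteness of the quiver this makes `BoundAlg k V R` finite-dimensional.) -/
def IsBoundQuiver (R : Set (Rels k V)) : Prop :=
  ∃ N : ℕ, ∀ (a b : V) (p : Path a b), N ≤ p.length → baMk k V R (pathElem k V p) = 0

/-- `R` is a minimal set of relations: no relation of `R` lies in the two-sided ideal
generated by the remaining ones. -/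
def MinimalRels (R : Set (Rels k V)) : Prop :=
  ∀ r ∈ R, baMk k V (R \ {r}) (relElem k V r.2.2) ≠ 0

end PathAlgebra

-- ============ auxiliary development ============

open scoped Classical
open Fin.NatCast

section MatHelp
variable {S : Type u} [CommRing S] {m : ℕ}

lemma diagonal_mul_stdBasisMatrix (d : Fin m → S) (i j : Fin m) (c : S) :
    Matrix.diagonal d * Matrix.single i j c = Matrix.single i j (d i * c) := by
  ext a b
  rw [Matrix.diagonal_mul]
  by_cases h : i = a ∧ j = b
  · obtain ⟨rfl, rfl⟩ := h; simp [Matrix.single_apply_same]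
  · simp only [Matrix.single, Matrix.of_apply, if_neg h, mul_zero]

lemma stdBasisMatrix_mul_diagonal (d : Fin m → S) (i j : Fin m) (c : S) :
    Matrix.single i j c * Matrix.diagonal d = Matrix.single i j (c * d j) := by
  ext a b
  rw [Matrix.mul_diagonal]
  by_cases h : i = a ∧ j = b
  · obtain ⟨rfl, rfl⟩ := h; simp [Matrix.single_apply_same]
  · simp only [Matrix.single, Matrix.of_apply, if_neg h, zero_mul]

end MatHelp

section Phi

variable {k : Type u} [Field k] {V : Type} [Quiver.{0} V] [Finite V]
variable (R : Set (Rels k V))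
variable {m : ℕ} [NeZero m] (w : Fin m → V) (ar : ∀ i : Fin m, w i ⟶ w (i + 1))
variable (i₀ : Fin m) (hne : w (i₀ + 1) ≠ w i₀)
variable (S : Type u) [CommRing S] [Algebra k S] (s : S)

/-- diagonal idempotent attached to a vertex -/
def Dm (v : V) : Matrix (Fin m) (Fin m) S :=
  Matrix.diagonal (fun j => if w j = v then 1 else 0)

/-- matrix attached to an arrow: the single arrow `ar i₀` acts by `s`, all others by `0`. -/
def Am {x y : V} (β : x ⟶ y) : Matrix (Fin m) (Fin m) S :=
  if (x = w i₀ ∧ y = w (i₀ + 1) ∧ HEq β (ar i₀)) then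
    Matrix.single (i₀ + 1) i₀ s else 0

def genMap : PGen V → Matrix (Fin m) (Fin m) S
  | .vert v => Dm w S v
  | .arr β => Am w ar i₀ S s β

def liftF : FreeAlgebra k (PGen V) →ₐ[k] Matrix (Fin m) (Fin m) S :=
  FreeAlgebra.lift k (genMap w ar i₀ S s)

lemma liftF_vert (v : V) :
    liftF w ar i₀ S s (FreeAlgebra.ι k (PGen.vert v)) = Dm w S v :=
  FreeAlgebra.lift_ι_apply _ _

lemma liftF_arr {x y : V} (β : x ⟶ y) :
    liftF w ar i₀ S s (FreeAlgebra.ι k (PGen.arr β)) = Am w ar i₀ S s β :=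
  FreeAlgebra.lift_ι_apply _ _

lemma Dm_mul_Dm (v v' : V) :
    (Dm w S v : Matrix (Fin m) (Fin m) S) * Dm w S v' =
      if v = v' then Dm w S v else 0 := by
  by_cases h : v = v'
  · subst h
    rw [if_pos rfl]
    ext i j
    simp only [Dm, Matrix.diagonal_mul_diagonal]
    by_cases hij : i = j
    · subst hij
      rw [Matrix.diagonal_apply_eq, Matrix.diagonal_apply_eq]
      by_cases hi : w i = v
      · rw [if_pos hi, one_mul]
      · rw [if_neg hi, zero_mul]
    · rw [Matrix.diagonal_apply_ne _ hij, Matrix.diagonal_apply_ne _ hij]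
  · rw [if_neg h]
    ext i j
    simp only [Dm, Matrix.diagonal_mul_diagonal]
    by_cases hij : i = j
    · subst hij
      rw [Matrix.diagonal_apply_eq, Matrix.zero_apply]
      by_cases hi : w i = v
      · have h2 : ¬ w i = v' := fun hh => h (hi ▸ hh ▸ rfl)
        rw [if_pos hi, if_neg h2, mul_zero]
      · rw [if_neg hi, zero_mul]
    · rw [Matrix.diagonal_apply_ne _ hij, Matrix.zero_apply]

lemma paRel_check : ∀ ⦃x y : FreeAlgebra k (PGen V)⦄, PARel k V x y →
    liftF w ar i₀ S s x = liftF w ar i₀ S s y := by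
  intro x y h
  cases h with
  | idem a =>
      rw [map_mul, liftF_vert, Dm_mul_Dm, if_pos rfl]
  | orth a b hab =>
      rw [map_mul, liftF_vert, liftF_vert, map_zero, Dm_mul_Dm, if_neg hab]
  | vsum =>
      letI : Fintype V := Fintype.ofFinite V
      rw [finsum_eq_sum_of_fintype, map_sum, map_one]
      simp only [liftF_vert]
      ext a b
      rw [Matrix.sum_apply]
      by_cases hab : a = b
      · subst hab
        simp only [Dm, Matrix.diagonal_apply_eq, Matrix.one_apply_eq]
        rw [Finset.sum_ite_eq Finset.univ (w a) (fun _ => (1:S))]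
        simp
      · simp [Dm, Matrix.diagonal_apply_ne _ hab, Matrix.one_apply_ne hab]
  | arrL α =>
      rename_i a b
      rw [map_mul, liftF_vert, liftF_arr]
      simp only [Am, Dm]
      by_cases hc : a = w i₀ ∧ b = w (i₀ + 1) ∧ HEq α (ar i₀)
      · rw [if_pos hc, diagonal_mul_stdBasisMatrix,
          show (if w (i₀+1) = b then (1:S) else 0) = 1 by rw [hc.2.1, if_pos rfl], one_mul]
      · rw [if_neg hc, mul_zero]
  | arrR α =>
      rename_i a b
      rw [map_mul, liftF_arr, liftF_vert]
      simp only [Am, Dm]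
      by_cases hc : a = w i₀ ∧ b = w (i₀ + 1) ∧ HEq α (ar i₀)
      · rw [if_pos hc, stdBasisMatrix_mul_diagonal,
          show (if w i₀ = a then (1:S) else 0) = 1 by rw [hc.1, if_pos rfl], mul_one]
      · rw [if_neg hc, zero_mul]

def liftP : PathAlg k V →ₐ[k] Matrix (Fin m) (Fin m) S :=
  RingQuot.liftAlgHom k ⟨liftF w ar i₀ S s, paRel_check w ar i₀ S s⟩

lemma liftP_paMk (x : FreeAlgebra k (PGen V)) :
    liftP w ar i₀ S s (paMk k V x) = liftF w ar i₀ S s x :=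
  RingQuot.liftAlgHom_mkAlgHom_apply _ _ _ _

lemma liftP_pathElem_cons {a b c : V} (p : Path a b) (β : b ⟶ c) :
    liftP w ar i₀ S s (pathElem k V (p.cons β)) =
      Am w ar i₀ S s β * liftP w ar i₀ S s (pathElem k V p) := by
  rw [pathElem, map_mul, liftP_paMk, liftF_arr]

lemma liftP_pathElem_nil (a : V) :
    liftP w ar i₀ S s (pathElem k V (Path.nil : Path a a)) = Dm w S a := by
  rw [pathElem, liftP_paMk, liftF_vert]

include hne in
lemma pathKill {a b : V} (p : Path a b) (hp : 2 ≤ p.length) :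
    liftP w ar i₀ S s (pathElem k V p) = 0 := by
  cases p with
  | nil => simp [Quiver.Path.length] at hp
  | cons p' β =>
    rename_i c
    cases p' with
    | nil => simp [Quiver.Path.length] at hp
    | cons p'' γ =>
      rw [liftP_pathElem_cons, liftP_pathElem_cons]
      by_cases hβ : c = w i₀ ∧ b = w (i₀ + 1) ∧ HEq β (ar i₀)
      · have hγ : Am w ar i₀ S s γ = 0 := by
          rw [Am, if_neg]
          rintro ⟨g1, g2, g3⟩
          exact hne (g2 ▸ hβ.1)
        rw [hγ, zero_mul, mul_zero]
      · simp only [Am]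
        rw [if_neg hβ, zero_mul]

include hne in
lemma relKill {a b : V} (r : RelData k V a b) :
    liftP w ar i₀ S s (relElem k V r) = 0 := by
  rw [relElem, Finsupp.sum, map_sum]
  refine Finset.sum_eq_zero fun p hp => ?_
  rw [map_smul, pathKill w ar i₀ hne S s p (r.len p hp), smul_zero]

include hne in
lemma boundRel_check : ∀ ⦃x y : PathAlg k V⦄,
    ((∃ r ∈ R, x = relElem k V r.2.2) ∧ y = 0) →
    liftP w ar i₀ S s x = liftP w ar i₀ S s y := by
  rintro x y ⟨⟨r, hr, rfl⟩, rfl⟩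
  rw [map_zero, relKill w ar i₀ hne S s]

def Phi : BoundAlg k V R →ₐ[k] Matrix (Fin m) (Fin m) S :=
  RingQuot.liftAlgHom k ⟨liftP w ar i₀ S s, boundRel_check R w ar i₀ hne S s⟩

lemma Phi_baMk (x : PathAlg k V) :
    Phi R w ar i₀ hne S s (baMk k V R x) = liftP w ar i₀ S s x :=
  RingQuot.liftAlgHom_mkAlgHom_apply _ _ _ _

end Phi

section LinAlg

variable {k : Type u} [Field k]

lemma exists_mulVec_ne_zero {m : ℕ} {M : Matrix (Fin m) (Fin m) k} (h : M ≠ 0) :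
    ∃ y, M.mulVec y ≠ 0 := by
  by_contra hy
  push_neg at hy
  apply h
  ext i j
  have := congrFun (hy (Pi.single j 1)) i
  rw [Matrix.mulVec_single] at this
  simpa using this

/-- The key linear-algebra contradiction. -/
lemma matrix_contra {m : ℕ} [NeZero m]
    (P : Fin m → Matrix (Fin m) (Fin m) k)
    (M : Fin m → Matrix (Fin m) (Fin m) k)
    (hPP : ∀ j, P j * P j = P j)
    (hPO : ∀ j j', j ≠ j' → P j * P j' = 0)
    (hPne : ∀ j, P j ≠ 0)
    (hMne : ∀ i, M i ≠ 0)
    (hL : ∀ i, P (i + 1) * M i = M i)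
    (hR : ∀ i, M i * P i = M i)
    (Nt : ℕ → Matrix (Fin m) (Fin m) k)
    (hN0 : Nt 0 = P 0)
    (hNs : ∀ t, Nt (t + 1) = M ((t : ℕ) : Fin m) * Nt t)
    (T : ℕ) (hT : Nt T = 0) : False := by
  classical
  set W : Fin m → Submodule k (Fin m → k) :=
    fun j => LinearMap.range (Matrix.mulVecLin (P j)) with hW
  have hmemW : ∀ (j : Fin m) (x : Fin m → k), x ∈ W j ↔ ∃ y, (P j).mulVec y = x := by
    intro j x
    simp [hW, LinearMap.mem_range, Matrix.mulVecLin_apply]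
  have hfix : ∀ j x, x ∈ W j → (P j).mulVec x = x := by
    intro j x hx
    obtain ⟨y, rfl⟩ := (hmemW j x).1 hx
    rw [Matrix.mulVec_mulVec, hPP]
  have hkill : ∀ j j' x, j ≠ j' → x ∈ W j' → (P j).mulVec x = 0 := by
    intro j j' x hjj hx
    obtain ⟨y, rfl⟩ := (hmemW j' x).1 hx
    rw [Matrix.mulVec_mulVec, hPO _ _ hjj, Matrix.zero_mulVec]
  have hWbot : ∀ j, W j ≠ ⊥ := by
    intro j hbot
    obtain ⟨y, hy⟩ := exists_mulVec_ne_zero (hPne j)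
    refine hy ?_
    have hmem : (P j).mulVec y ∈ W j := (hmemW j _).2 ⟨y, rfl⟩
    rw [hbot] at hmem
    simpa using hmem
  have hpos : ∀ j, 0 < Module.finrank k (W j) := by
    intro j
    rw [Module.finrank_pos_iff]
    exact Submodule.nontrivial_iff_ne_bot.2 (hWbot j)
  have hsum : ∑ j : Fin m, Module.finrank k (W j) ≤ m := by
    set g : (∀ j : Fin m, W j) →ₗ[k] (Fin m → k) :=
      ∑ j : Fin m, (W j).subtype.comp (LinearMap.proj j) with hg
    have hginj : Function.Injective g := by
      rw [← LinearMap.ker_eq_bot, Submodule.eq_bot_iff]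
      intro x hx
      have hgx : ∑ j : Fin m, ((x j : Fin m → k)) = 0 := by
        simpa [hg, LinearMap.sum_apply, LinearMap.comp_apply] using hx
      have hall : ∀ j₀, (x j₀ : Fin m → k) = 0 := by
        intro j₀
        have h1 : (P j₀).mulVec (∑ j : Fin m, ((x j : Fin m → k))) = (x j₀ : Fin m → k) := by
          rw [← Matrix.mulVecLin_apply, map_sum, Finset.sum_eq_single j₀]
          · rw [Matrix.mulVecLin_apply]; exact hfix j₀ _ (x j₀).2
          · intro j _ hj
            rw [Matrix.mulVecLin_apply]
            exact hkill j₀ j _ (Ne.symm hj) (x j).2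
          · intro h; exact absurd (Finset.mem_univ j₀) h
        rw [hgx, Matrix.mulVec_zero] at h1
        exact h1.symm
      funext j₀
      exact Subtype.ext (hall j₀)
    have h1 : Module.finrank k (∀ j : Fin m, W j) = ∑ j, Module.finrank k (W j) :=
      Module.finrank_pi_fintype k
    have h2 := LinearMap.finrank_le_finrank_of_injective hginj
    rw [h1, Module.finrank_pi, Fintype.card_fin] at h2
    exact h2
  have hone : ∀ j, Module.finrank k (W j) = 1 := by
    by_contra hc
    push_neg at hc
    obtain ⟨j₀, hj₀⟩ := hc
    have h2 : 1 < Module.finrank k (W j₀) := lt_of_le_of_ne (hpos j₀) (Ne.symm hj₀)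
    have h3 : ∑ _j : Fin m, (1:ℕ) < ∑ j : Fin m, Module.finrank k (W j) :=
      Finset.sum_lt_sum (fun j _ => hpos j) ⟨j₀, Finset.mem_univ _, h2⟩
    simp only [Finset.sum_const, Finset.card_univ, Fintype.card_fin, smul_eq_mul, mul_one] at h3
    exact lt_irrefl _ (lt_of_lt_of_le h3 hsum)
  have hspan : ∀ (j : Fin m) (u : Fin m → k), u ∈ W j → u ≠ 0 →
      ∀ v ∈ W j, ∃ c : k, v = c • u := by
    intro j u hu hune v hv
    have hs : Submodule.span k {u} = W j := by
      apply Submodule.eq_of_le_of_finrank_le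
      · rw [Submodule.span_le, Set.singleton_subset_iff]; exact hu
      · rw [hone j, finrank_span_singleton hune]
    rw [← hs] at hv
    obtain ⟨c, hc⟩ := Submodule.mem_span_singleton.1 hv
    exact ⟨c, hc.symm⟩
  have hstep : ∀ (i : Fin m) (u : Fin m → k), u ∈ W i → u ≠ 0 →
      (M i).mulVec u ≠ 0 ∧ (M i).mulVec u ∈ W (i + 1) := by
    intro i u hu hune
    constructor
    · obtain ⟨y, hy⟩ := exists_mulVec_ne_zero (hMne i)
      have hx : (P i).mulVec y ∈ W i := (hmemW i _).2 ⟨y, rfl⟩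
      have hMx : (M i).mulVec ((P i).mulVec y) = (M i).mulVec y := by
        rw [Matrix.mulVec_mulVec, hR]
      obtain ⟨c, hc⟩ := hspan i u hu hune _ hx
      intro h0
      apply hy
      rw [← hMx, hc, ← Matrix.mulVecLin_apply, map_smul, Matrix.mulVecLin_apply, h0, smul_zero]
    · refine (hmemW _ _).2 ⟨(M i).mulVec u, ?_⟩
      rw [Matrix.mulVec_mulVec, hL]
  obtain ⟨x₀, hx₀W, hx₀⟩ := (Submodule.ne_bot_iff _).1 (hWbot 0)
  have main : ∀ t : ℕ, (Nt t).mulVec x₀ ≠ 0 ∧ (Nt t).mulVec x₀ ∈ W ((t : ℕ) : Fin m) := by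
    intro t
    induction t with
    | zero =>
      rw [hN0, hfix 0 _ hx₀W]
      exact ⟨hx₀, by rw [Nat.cast_zero]; exact hx₀W⟩
    | succ n ih =>
      rw [hNs, ← Matrix.mulVec_mulVec, Nat.cast_add_one]
      exact hstep ((n : ℕ) : Fin m) _ ih.2 ih.1
  have hfin := (main T).1
  rw [hT, Matrix.zero_mulVec] at hfin
  exact hfin rfl

end LinAlg

section Chain

variable {k : Type u} [Field k] {V : Type} [Quiver.{0} V]

def castPath {a b c : V} (h : b = c) (p : Path a b) : Path a c := h ▸ p

lemma pathElem_castPath {a b c : V} (h : b = c) (p : Path a b) :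
    pathElem k V (castPath h p) = pathElem k V p := by subst h; rfl

lemma length_castPath {a b c : V} (h : b = c) (p : Path a b) :
    (castPath h p).length = p.length := by subst h; rfl

variable {m : ℕ} [NeZero m] (w : Fin m → V) (ar : ∀ i : Fin m, w i ⟶ w (i + 1))

def chain : (t : ℕ) → Path (w 0) (w ((t : ℕ) : Fin m))
  | 0 => castPath (congrArg w (Nat.cast_zero (R := Fin m)).symm) Path.nil
  | t + 1 => castPath (congrArg w (Nat.cast_add_one (R := Fin m) (n := t)).symm)
      ((chain t).cons (ar ((t : ℕ) : Fin m)))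

lemma chain_length : ∀ t : ℕ, (chain w ar t).length = t
  | 0 => by rw [chain, length_castPath]; rfl
  | t + 1 => by
      rw [chain, length_castPath]
      show (chain w ar t).length + 1 = t + 1
      rw [chain_length t]

lemma pathElem_chain_zero :
    pathElem k V (chain w ar 0) = paMk k V (FreeAlgebra.ι k (PGen.vert (w 0))) := by
  rw [chain, pathElem_castPath]
  simp [pathElem]

lemma pathElem_chain_succ (t : ℕ) :
    pathElem k V (chain w ar (t + 1)) =
      paMk k V (FreeAlgebra.ι k (PGen.arr (ar ((t : ℕ) : Fin m)))) * pathElem k V (chain w ar t) := by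
  rw [chain, pathElem_castPath]
  simp [pathElem]

end Chain

section BAIdent

variable {k : Type u} [Field k] {V : Type} [Quiver.{0} V] (R : Set (Rels k V))

lemma paMk_rel {x y : FreeAlgebra k (PGen V)} (h : PARel k V x y) :
    paMk k V x = paMk k V y :=
  RingQuot.mkAlgHom_rel k h

def Ev (v : V) : BoundAlg k V R := baMk k V R (paMk k V (FreeAlgebra.ι k (PGen.vert v)))

def Aelem {x y : V} (β : x ⟶ y) : BoundAlg k V R :=
  baMk k V R (paMk k V (FreeAlgebra.ι k (PGen.arr β)))

lemma Ev_mul_Ev (v : V) : Ev R v * Ev R v = Ev R v := by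
  rw [Ev, ← map_mul, ← map_mul, paMk_rel (PARel.idem v)]

lemma Ev_orth (v v' : V) (h : v ≠ v') : Ev R v * Ev R v' = 0 := by
  rw [Ev, Ev, ← map_mul, ← map_mul, paMk_rel (PARel.orth v v' h), map_zero, map_zero]

lemma Ev_mul_Aelem {x y : V} (β : x ⟶ y) : Ev R y * Aelem R β = Aelem R β := by
  rw [Ev, Aelem, ← map_mul, ← map_mul, paMk_rel (PARel.arrL β)]

lemma Aelem_mul_Ev {x y : V} (β : x ⟶ y) : Aelem R β * Ev R x = Aelem R β := by
  rw [Aelem, Ev, ← map_mul, ← map_mul, paMk_rel (PARel.arrR β)]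

end BAIdent

section Topo

variable {k : Type u} [Field k]

lemma zariski_basic_open {ι : Type v} (p : MvPolynomial ι k) :
    @IsOpen _ (zariskiTop k ι) {x | MvPolynomial.eval x p ≠ 0} :=
  TopologicalSpace.isOpen_generateFrom_of_mem ⟨p, rfl⟩

lemma mv_unit_eval (p : MvPolynomial Unit k) (x : Unit → k) :
    MvPolynomial.eval x p
      = Polynomial.eval (x ()) (MvPolynomial.aeval (fun _ : Unit => Polynomial.X) p) := by
  induction p using MvPolynomial.induction_on with
  | C c => simp
  | add p q hp hq => simp [hp, hq]
  | mul_X p u hp => cases u; simp [hp]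

lemma zariski_open_cofinite (U : Set (Unit → k)) (h : @IsOpen _ (zariskiTop k Unit) U) :
    U = ∅ ∨ Uᶜ.Finite := by
  have h' : TopologicalSpace.GenerateOpen
      {U | ∃ p : MvPolynomial Unit k, U = {x | MvPolynomial.eval x p ≠ 0}} U := h
  clear h
  induction h' with
  | basic U hU =>
    obtain ⟨p, rfl⟩ := hU
    have key : ∀ x : Unit → k, MvPolynomial.eval x p
        = Polynomial.eval (x ()) (MvPolynomial.aeval (fun _ : Unit => Polynomial.X) p) :=
      mv_unit_eval p
    set q : Polynomial k := MvPolynomial.aeval (fun _ : Unit => Polynomial.X) p with hq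
    by_cases hq0 : q = 0
    · left
      ext x
      simp [key x, hq0]
    · right
      have heq : {x : Unit → k | MvPolynomial.eval x p ≠ 0}ᶜ
          = (fun x : Unit → k => x ()) ⁻¹' {t | q.IsRoot t} := by
        ext x
        simp [key x, Polynomial.IsRoot]
      rw [heq]
      refine Set.Finite.preimage ?_ (Polynomial.finite_setOf_isRoot hq0)
      intro a _ b _ hab
      funext u; cases u; exact hab
  | univ => right; simp
  | inter U V hU hV ihU ihV =>
    rcases ihU with rfl | hUf
    · left; simp
    rcases ihV with rfl | hVf
    · left; simp
    right
    rw [Set.compl_inter]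
    exact hUf.union hVf
  | sUnion S hS ih =>
    by_cases hall : ∀ U ∈ S, U = ∅
    · left
      simp only [Set.sUnion_eq_empty]
      exact hall
    · right
      push_neg at hall
      obtain ⟨U, hUS, hUne⟩ := hall
      rcases ih U hUS with rfl | hUf
      · simp at hUne
      exact hUf.subset (Set.compl_subset_compl.2 (Set.subset_sUnion_of_mem hUS))

lemma zariski_unit_preconnected [Infinite k] :
    @IsPreconnected (Unit → k) (zariskiTop k Unit) Set.univ := by
  letI := zariskiTop k Unit
  haveI : Infinite (Unit → k) :=
    Infinite.of_injective (fun c => (fun _ => c : Unit → k)) (fun a b h => congrFun h ())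
  intro U V hU hV _ hU' hV'
  rcases zariski_open_cofinite U hU with rfl | hUf
  · obtain ⟨x, -, hx⟩ := hU'; exact absurd hx (Set.notMem_empty x)
  rcases zariski_open_cofinite V hV with rfl | hVf
  · obtain ⟨x, -, hx⟩ := hV'; exact absurd hx (Set.notMem_empty x)
  obtain ⟨x, hx⟩ := ((hUf.union hVf).infinite_compl).nonempty
  rw [Set.compl_union, compl_compl, compl_compl] at hx
  exact ⟨x, Set.mem_univ x, hx⟩

variable {A : Type u} [Ring A] [Algebra k A] {n : ℕ}

lemma isOpen_apply_ne (x : A) :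
    @IsOpen _ (modVarTop k A n) {f : A →ₐ[k] Matrix (Fin n) (Fin n) k | f x ≠ 0} := by
  letI := modVarTop k A n
  letI := zariskiTop k (A × Fin n × Fin n)
  have heq : {f : A →ₐ[k] Matrix (Fin n) (Fin n) k | f x ≠ 0}
      = ⋃ ij : Fin n × Fin n,
        (fun (f : A →ₐ[k] Matrix (Fin n) (Fin n) k) (y : A × Fin n × Fin n) => f y.1 y.2.1 y.2.2) ⁻¹'
          {c : A × Fin n × Fin n → k |
            MvPolynomial.eval c (MvPolynomial.X (x, ij.1, ij.2) : MvPolynomial _ k) ≠ 0} := by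
    ext f
    simp only [Set.mem_setOf_eq, Set.mem_iUnion, Set.mem_preimage, MvPolynomial.eval_X]
    constructor
    · intro hf
      by_contra hc
      push_neg at hc
      refine hf (Matrix.ext fun i j => ?_)
      simpa using hc (i, j)
    · rintro ⟨ij, hij⟩ h0
      rw [h0] at hij
      simpa using hij
  rw [heq]
  refine isOpen_iUnion fun ij => ?_
  have hcont : @Continuous _ _ (modVarTop k A n) (zariskiTop k (A × Fin n × Fin n))
      (fun (f : A →ₐ[k] Matrix (Fin n) (Fin n) k) (y : A × Fin n × Fin n) => f y.1 y.2.1 y.2.2) :=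
    continuous_induced_dom
  exact hcont.isOpen_preimage _ (zariski_basic_open _)

lemma preirr_inter_finset {T : Type v} [TopologicalSpace T] {s : Set T} (hs : IsIrreducible s)
    {ι : Type} (t : Finset ι) (U : ι → Set T)
    (hop : ∀ i, IsOpen (U i)) (hne : ∀ i, (s ∩ U i).Nonempty) :
    (s ∩ ⋂ i ∈ t, U i).Nonempty := by
  classical
  induction t using Finset.induction_on with
  | empty => simpa using hs.1
  | insert a t' hni ih =>
    rw [Finset.set_biInter_insert]
    exact hs.2 (U a) (⋂ i ∈ t', U i) (hop a)
      (isOpen_biInter_finset (fun i _ => hop i))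
      (hne a) ih

end Topo

section Natural

variable {k : Type u} [Field k] {V : Type} [Quiver.{0} V] [Finite V]
variable (R : Set (Rels k V))
variable {m : ℕ} [NeZero m] (w : Fin m → V) (ar : ∀ i : Fin m, w i ⟶ w (i + 1))
variable (i₀ : Fin m) (hne : w (i₀ + 1) ≠ w i₀)
variable {S : Type u} [CommRing S] [Algebra k S] (s : S)
variable {S' : Type u} [CommRing S'] [Algebra k S'] (ψ : S →ₐ[k] S')

lemma mapMatrix_Dm (v : V) :
    ψ.mapMatrix (Dm w S v : Matrix (Fin m) (Fin m) S) = Dm w S' v := by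
  ext i j
  simp only [AlgHom.mapMatrix_apply, Dm, Matrix.map_apply]
  by_cases hij : i = j
  · subst hij
    rw [Matrix.diagonal_apply_eq, Matrix.diagonal_apply_eq, apply_ite ψ, map_one, map_zero]
  · rw [Matrix.diagonal_apply_ne _ hij, Matrix.diagonal_apply_ne _ hij, map_zero]

lemma mapMatrix_Am {x y : V} (β : x ⟶ y) :
    ψ.mapMatrix (Am w ar i₀ S s β) = Am w ar i₀ S' (ψ s) β := by
  simp only [Am]
  by_cases hc : x = w i₀ ∧ y = w (i₀ + 1) ∧ HEq β (ar i₀)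
  · rw [if_pos hc, if_pos hc]
    ext i j
    simp only [AlgHom.mapMatrix_apply, Matrix.map_apply, Matrix.single, Matrix.of_apply]
    rw [apply_ite ψ, map_zero]
  · rw [if_neg hc, if_neg hc, map_zero]

include hne in
lemma Phi_natural :
    (ψ.mapMatrix).comp (Phi R w ar i₀ hne S s) = Phi R w ar i₀ hne S' (ψ s) := by
  apply RingQuot.ringQuot_ext'
  apply RingQuot.ringQuot_ext'
  apply FreeAlgebra.hom_ext
  funext g
  show ψ.mapMatrix (Phi R w ar i₀ hne S s (baMk k V R (paMk k V (FreeAlgebra.ι k g))))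
      = Phi R w ar i₀ hne S' (ψ s) (baMk k V R (paMk k V (FreeAlgebra.ι k g)))
  rw [Phi_baMk, Phi_baMk, liftP_paMk, liftP_paMk]
  cases g with
  | vert v => rw [liftF_vert, liftF_vert, mapMatrix_Dm]
  | arr β => rw [liftF_arr, liftF_arr, mapMatrix_Am]

include hne in
lemma Phi_zero_indep (j₀ : Fin m) (hne' : w (j₀ + 1) ≠ w j₀) :
    Phi R w ar i₀ hne k (0 : k) = Phi R w ar j₀ hne' k (0 : k) := by
  apply RingQuot.ringQuot_ext'
  apply RingQuot.ringQuot_ext'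
  apply FreeAlgebra.hom_ext
  funext g
  show Phi R w ar i₀ hne k 0 (baMk k V R (paMk k V (FreeAlgebra.ι k g)))
      = Phi R w ar j₀ hne' k 0 (baMk k V R (paMk k V (FreeAlgebra.ι k g)))
  rw [Phi_baMk, Phi_baMk, liftP_paMk, liftP_paMk]
  cases g with
  | vert v => rw [liftF_vert, liftF_vert]
  | arr β =>
    rw [liftF_arr, liftF_arr]
    simp only [Am]
    split <;> split <;> simp

end Natural

section Extract

variable {V : Type} [Quiver.{0} V]

/-- list of vertices of a path: sources of its arrows, in order (terminal excluded) -/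
def vertList : ∀ {a b : V}, Path a b → List V
  | _, _, Path.nil => []
  | _, _, Path.cons (b := c) p _ => vertList p ++ [c]

lemma vertList_nil {a : V} : vertList (Path.nil : Path a a) = [] := by
  simp [vertList]

lemma vertList_cons {a b c : V} (p : Path a b) (γ : b ⟶ c) :
    vertList (p.cons γ) = vertList p ++ [b] := by
  simp [vertList]

lemma length_vertList : ∀ {a b : V} (p : Path a b), (vertList p).length = p.length := by
  intro a b p
  induction p with
  | nil => simp [vertList_nil]
  | cons p' γ ih => simp [vertList_cons, ih]

lemma head_vertList : ∀ {a b : V} (p : Path a b), 0 < p.length → ∃ t, vertList p = a :: t := by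
  intro a b p hp
  induction p with
  | nil => simp at hp
  | @cons mid term p' γ ih =>
      by_cases h0 : 0 < p'.length
      · obtain ⟨t, ht⟩ := ih h0
        exact ⟨t ++ [mid], by rw [vertList_cons, ht]; simp⟩
      · cases p' with
        | nil => exact ⟨[], by simp [vertList_cons, vertList_nil]⟩
        | cons q δ => exact absurd (Nat.succ_pos _) h0

lemma last_arrow : ∀ {a b : V} (p : Path a b) (j : ℕ) (_ : j + 1 = (vertList p).length)
    (hlt : j < (vertList p).length), Nonempty ((vertList p)[j]'hlt ⟶ b) := by
  intro a b p j hj hlt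
  cases p with
  | nil => simp [vertList_nil] at hlt
  | @cons mid term p' γ =>
      simp only [vertList_cons] at hj hlt ⊢
      rw [List.getElem_concat_length
        (by simp only [List.length_append, List.length_cons, List.length_nil] at hj; omega)]
      exact ⟨γ⟩

lemma get_arrow : ∀ {a b : V} (p : Path a b) (j : ℕ) (h1 : j + 1 < (vertList p).length),
    Nonempty ((vertList p)[j]'(Nat.lt_of_succ_lt h1) ⟶ (vertList p)[j + 1]'h1) := by
  intro a b p
  induction p with
  | nil => intro j h1; simp [vertList_nil] at h1
  | @cons mid term p' γ ih =>
      intro j h1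
      have h1' : j + 1 < (vertList p' ++ [mid]).length := by
        rw [← vertList_cons p' γ]; exact h1
      simp only [vertList_cons] at h1 ⊢
      by_cases hj : j + 1 < (vertList p').length
      · rw [List.getElem_append_left (Nat.lt_of_succ_lt hj), List.getElem_append_left hj]
        exact ih j hj
      · have hj1 : j + 1 = (vertList p').length := by
          simp only [List.length_append, List.length_cons, List.length_nil] at h1
          omega
        rw [List.getElem_append_left (by omega)]
        rw [List.getElem_concat_length hj1]
        exact last_arrow p' j hj1 (by omega)

variable [DecidableEq V]

lemma splitAt : ∀ {a b : V} (p : Path a b) (v : V), v ∈ vertList p →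
    ∃ (p₁ : Path a v) (p₂ : Path v b), p₁.length + p₂.length = p.length ∧ 0 < p₂.length ∧
      vertList p = vertList p₁ ++ vertList p₂ ∧ (vertList p₂).count v = 1 := by
  intro a b p v hv
  induction p with
  | nil => simp [vertList_nil] at hv
  | @cons mid term p' γ ih =>
      by_cases hvc : v = mid
      · subst hvc
        refine ⟨p', Path.nil.cons γ, ?_, Nat.succ_pos _, ?_, ?_⟩
        · rfl
        · rw [vertList_cons, vertList_cons, vertList_nil]
          simp
        · rw [vertList_cons, vertList_nil]
          simp
      · rw [vertList_cons, List.mem_append] at hv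
        have hv' : v ∈ vertList p' := by
          rcases hv with h | h
          · exact h
          · simp at h; exact absurd h hvc
        obtain ⟨p₁, p₂', hlen, hpos, hvleq, hcount⟩ := ih hv'
        refine ⟨p₁, p₂'.cons γ, ?_, Nat.succ_pos _, ?_, ?_⟩
        · show p₁.length + (p₂'.length + 1) = p'.length + 1
          omega
        · rw [vertList_cons, hvleq, vertList_cons, List.append_assoc]
        · rw [vertList_cons, List.count_append, hcount]
          simp [hvc, Ne.symm hvc, List.count_singleton]

lemma goodPath {a b : V} (hab : b ≠ a) :
    ∀ (n : ℕ) (q : Path a b), q.length ≤ n → 0 < q.length →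
    ∃ q' : Path a b, 0 < q'.length ∧ (vertList q').Nodup ∧ b ∉ vertList q' := by
  intro n
  induction n with
  | zero => intro q hq hq0; omega
  | succ n ih =>
      intro q hq hq0
      by_cases hb : b ∈ vertList q
      · obtain ⟨p₁, p₂, hlen, hpos, -, -⟩ := splitAt q b hb
        have h1 : 0 < p₁.length := by
          rcases Nat.eq_zero_or_pos p₁.length with h | h
          · exact absurd (Quiver.Path.eq_of_length_zero p₁ h) (Ne.symm hab)
          · exact h
        exact ih p₁ (by omega) h1
      · by_cases hnd : (vertList q).Nodup
        · exact ⟨q, hq0, hnd, hb⟩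
        · have hdup : ∃ v, 2 ≤ (vertList q).count v := by
            rw [List.nodup_iff_count_le_one] at hnd
            push_neg at hnd
            obtain ⟨v, hv⟩ := hnd
            exact ⟨v, hv⟩
          obtain ⟨v, hv⟩ := hdup
          have hvmem : v ∈ vertList q := List.count_pos_iff.1 (by omega)
          obtain ⟨p₁, p₂, hlen, hpos, hvleq, hcount⟩ := splitAt q v hvmem
          have hv1 : v ∈ vertList p₁ := by
            refine List.count_pos_iff.1 ?_
            rw [hvleq, List.count_append, hcount] at hv
            omega
          obtain ⟨r₁, r₂, hlen2, hpos2, -, -⟩ := splitAt p₁ v hv1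
          refine ih (r₁.comp p₂) ?_ ?_
          · rw [Quiver.Path.length_comp]
            omega
          · rw [Quiver.Path.length_comp]
            omega

lemma exists_nonloop : ∀ {a b : V} (p : Path a b), pathDeg p ≠ 0 →
    ∃ (x y : V) (_ : x ⟶ y), x ≠ y ∧ Nonempty (Path a x) ∧ Nonempty (Path y b) := by
  intro a b p
  induction p with
  | nil => intro h; simp [pathDeg] at h
  | @cons mid term p' γ ih =>
      intro hd
      simp only [pathDeg] at hd
      by_cases hmt : mid = term
      · rw [if_pos hmt, add_zero] at hd
        obtain ⟨x, y, β, hxy, hr1, ⟨r2⟩⟩ := ih hd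
        exact ⟨x, y, β, hxy, hr1, ⟨r2.cons γ⟩⟩
      · exact ⟨mid, term, γ, hmt, ⟨p'⟩, ⟨Path.nil⟩⟩

lemma cycle_extract' {a : V} (p : Path a a) (hdeg : pathDeg p ≠ 0) :
    ∃ (m' : ℕ) (w : Fin (m' + 2) → V), Function.Injective w ∧
      ∀ i : Fin (m' + 2), Nonempty (w i ⟶ w (i + 1)) := by
  obtain ⟨x, y, β, hxy, ⟨r1⟩, ⟨r2⟩⟩ := exists_nonloop p hdeg
  set q0 : Path y x := r2.comp r1 with hq0
  have hq0pos : 0 < q0.length := by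
    rcases Nat.eq_zero_or_pos q0.length with h | h
    · exact absurd (Quiver.Path.eq_of_length_zero q0 h).symm hxy
    · exact h
  obtain ⟨q, hqpos, hqnd, hqx⟩ := goodPath hxy q0.length q0 le_rfl hq0pos
  have hL : (vertList q).length = q.length := length_vertList q
  have hL1 : 1 ≤ (vertList q).length := by omega
  obtain ⟨m', hm'⟩ : ∃ m', (vertList q).length = m' + 1 := ⟨(vertList q).length - 1, by omega⟩
  have hidx : ∀ i : Fin (m' + 2), 0 < i.val → i.val - 1 < (vertList q).length := by
    intro i hi
    have := i.isLt
    omega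
  set w : Fin (m' + 2) → V := fun i =>
    if h : i.val = 0 then x else (vertList q)[i.val - 1]'(hidx i (by omega)) with hw
  have hwpos : ∀ (i : Fin (m' + 2)) (h : 0 < i.val), w i = (vertList q)[i.val - 1]'(hidx i h) := by
    intro i h
    simp only [hw]
    rw [dif_neg (by omega)]
  have hw0 : ∀ (i : Fin (m' + 2)), i.val = 0 → w i = x := by
    intro i h
    simp only [hw]
    rw [dif_pos h]
  refine ⟨m', w, ?_, ?_⟩
  · intro i j hij
    by_cases hi : i.val = 0 <;> by_cases hj : j.val = 0
    · exact Fin.ext (by omega)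
    · rw [hw0 i hi, hwpos j (by omega)] at hij
      exact (hqx (List.mem_iff_getElem.2 ⟨↑j - 1, hidx j (by omega), hij.symm⟩)).elim
    · rw [hwpos i (by omega), hw0 j hj] at hij
      exact (hqx (List.mem_iff_getElem.2 ⟨↑i - 1, hidx i (by omega), hij⟩)).elim
    · rw [hwpos i (by omega), hwpos j (by omega)] at hij
      have := (hqnd.getElem_inj_iff).1 hij
      exact Fin.ext (by omega)
  · intro i
    have hval1 : ((1 : Fin (m' + 2)) : ℕ) = 1 := rfl
    have haddval : ((i + 1 : Fin (m' + 2)) : ℕ) = (i.val + 1) % (m' + 2) := by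
      rw [Fin.add_def, hval1]
    by_cases hi0 : i.val = 0
    · have h1 : ((i + 1 : Fin (m' + 2)) : ℕ) = 1 := by
        rw [haddval, hi0]
        exact Nat.mod_eq_of_lt (by omega)
      have hwi : w i = x := hw0 i hi0
      have hwi1 : w (i + 1) = (vertList q)[0]'(by omega) := by
        rw [hwpos (i + 1) (by omega)]
        congr 1
        omega
      obtain ⟨t, ht⟩ := head_vertList q hqpos
      have h2 : vertList q = y :: t := ht
      have hly : (vertList q)[0]'(by omega) = y := by
        simp only [h2, List.getElem_cons_zero]
      rw [hwi, hwi1, hly]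
      exact ⟨β⟩
    · by_cases hilast : i.val = m' + 1
      · have h1 : ((i + 1 : Fin (m' + 2)) : ℕ) = 0 := by
          rw [haddval, hilast]
          exact Nat.mod_self _
        have hwi1 : w (i + 1) = x := hw0 _ h1
        have hwi : w i = (vertList q)[m']'(by omega) := by
          rw [hwpos i (by omega)]
          congr 1
          omega
        rw [hwi, hwi1]
        exact last_arrow q m' (by omega) (by omega)
      · have hlt : i.val < m' + 1 := by
          have := i.isLt
          omega
        have h1 : ((i + 1 : Fin (m' + 2)) : ℕ) = i.val + 1 := by
          rw [haddval]
          exact Nat.mod_eq_of_lt (by omega)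
        have harr : (i.val - 1) + 1 < (vertList q).length := by omega
        have hwi : w i = (vertList q)[i.val - 1]'(Nat.lt_of_succ_lt harr) :=
          hwpos i (by omega)
        have hwi1 : w (i + 1) = (vertList q)[(i.val - 1) + 1]'harr := by
          rw [hwpos (i + 1) (by omega)]
          congr 1
          omega
        rw [hwi, hwi1]
        exact get_arrow q (i.val - 1) harr

end Extract

section Curve

variable {k : Type u} [Field k] {V : Type} [Quiver.{0} V] [Finite V]
variable (R : Set (Rels k V))
variable {m : ℕ} [NeZero m] (w : Fin m → V) (ar : ∀ i : Fin m, w i ⟶ w (i + 1))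
variable (i₀ : Fin m) (hne : w (i₀ + 1) ≠ w i₀)

lemma eval_aeval' {σ : Type u} (x : Unit → k) (g : σ → MvPolynomial Unit k)
    (p : MvPolynomial σ k) :
    MvPolynomial.eval x (MvPolynomial.aeval g p)
      = MvPolynomial.eval (fun i => MvPolynomial.eval x (g i)) p := by
  induction p using MvPolynomial.induction_on with
  | C c => simp
  | add p q hp hq => simp only [map_add, hp, hq]
  | mul_X p s hp =>
      simp only [map_mul, MvPolynomial.aeval_X, MvPolynomial.eval_mul, MvPolynomial.eval_X, hp]

def curve : (Unit → k) → (BoundAlg k V R →ₐ[k] Matrix (Fin m) (Fin m) k) :=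
  fun x => Phi R w ar i₀ hne k (x ())

lemma curve_apply (x : Unit → k) (a : BoundAlg k V R) (i j : Fin m) :
    (curve R w ar i₀ hne x a) i j
      = MvPolynomial.eval x
          ((Phi R w ar i₀ hne (MvPolynomial Unit k) (MvPolynomial.X ()) a) i j) := by
  have hnat := Phi_natural R w ar i₀ hne (S := MvPolynomial Unit k) (MvPolynomial.X ())
      (ψ := MvPolynomial.aeval (fun _ : Unit => x ()))
  rw [MvPolynomial.aeval_X] at hnat
  have happ : curve R w ar i₀ hne x a
      = (MvPolynomial.aeval (fun _ : Unit => x ()) :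
          MvPolynomial Unit k →ₐ[k] k).mapMatrix
        (Phi R w ar i₀ hne (MvPolynomial Unit k) (MvPolynomial.X ()) a) := by
    rw [curve]
    exact (congrArg (fun F => F a) hnat).symm
  rw [happ]
  show (MvPolynomial.aeval (fun _ : Unit => x ()) :
      MvPolynomial Unit k →ₐ[k] k) _ = _
  have hx : (fun _ : Unit => x ()) = x := funext fun u => by cases u; rfl
  rw [hx]
  exact RingHom.congr_fun (MvPolynomial.coe_aeval_eq_eval x) _

lemma curve_continuous :
    @Continuous _ _ (zariskiTop k Unit) (modVarTop k (BoundAlg k V R) m)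
      (curve R w ar i₀ hne) := by
  letI := zariskiTop k Unit
  letI := modVarTop k (BoundAlg k V R) m
  letI := zariskiTop k (BoundAlg k V R × Fin m × Fin m)
  apply continuous_induced_rng.2
  apply continuous_generateFrom_iff.mpr
  rintro U ⟨p, rfl⟩
  have heq : ((fun (f : BoundAlg k V R →ₐ[k] Matrix (Fin m) (Fin m) k)
          (y : BoundAlg k V R × Fin m × Fin m) => f y.1 y.2.1 y.2.2) ∘ curve R w ar i₀ hne) ⁻¹'
        {c | MvPolynomial.eval c p ≠ 0}
      = {x | MvPolynomial.eval x
          (MvPolynomial.aeval (fun idx : BoundAlg k V R × Fin m × Fin m =>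
            (Phi R w ar i₀ hne (MvPolynomial Unit k) (MvPolynomial.X ()) idx.1)
              idx.2.1 idx.2.2) p) ≠ 0} := by
    ext x
    simp only [Set.mem_preimage, Set.mem_setOf_eq, Function.comp_apply]
    rw [eval_aeval']
    have hfun : (fun y : BoundAlg k V R × Fin m × Fin m =>
          curve R w ar i₀ hne x y.1 y.2.1 y.2.2)
        = fun idx : BoundAlg k V R × Fin m × Fin m =>
            MvPolynomial.eval x
              ((Phi R w ar i₀ hne (MvPolynomial Unit k) (MvPolynomial.X ()) idx.1)
                idx.2.1 idx.2.2) :=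
      funext fun idx => curve_apply R w ar i₀ hne x idx.1 idx.2.1 idx.2.2
    rw [hfun]
  rw [heq]
  exact zariski_basic_open _

lemma Phi_Ev (S : Type u) [CommRing S] [Algebra k S] (s : S) (v : V) :
    Phi R w ar i₀ hne S s (Ev R v) = Dm w S v := by
  rw [Ev, Phi_baMk, liftP_paMk, liftF_vert]

lemma Phi_Aelem_self (S : Type u) [CommRing S] [Algebra k S] (s : S) :
    Phi R w ar i₀ hne S s (Aelem R (ar i₀))
      = Matrix.single (i₀ + 1) i₀ s := by
  rw [Aelem, Phi_baMk, liftP_paMk, liftF_arr]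
  simp [Am]

end Curve



/-- Every geometrically irreducible finite-dimensional algebra over an
algebraically closed field, presented as the path algebra `kQ/I` of a bound quiver, is
weakly triangular: its Gabriel quiver `Q` contains no oriented cycle of positive
degree. -/
theorem geometricallyIrreducible_weaklyTriangular (k : Type u) [Field k] [IsAlgClosed k]
    (V : Type) [Quiver.{0} V] [Finite V] [DecidableEq V] [∀ a b : V, Finite (a ⟶ b)]
    (R : Set (Rels k V)) (hbd : IsBoundQuiver k V R)
    (hirr : GeometricallyIrreducible k (BoundAlg k V R)) :
    ∀ (a : V) (p : Path a a), pathDeg p = 0 := by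
  intro a p
  by_contra hdeg
  obtain ⟨m', w, winj, harr⟩ := cycle_extract' p hdeg
  set ar : ∀ i : Fin (m' + 2), w i ⟶ w (i + 1) := fun i => (harr i).some with har
  have hone0 : (1 : Fin (m' + 2)) ≠ 0 := by
    intro h
    rw [Fin.one_eq_zero_iff] at h
    omega
  have hne : ∀ i : Fin (m' + 2), w (i + 1) ≠ w i := by
    intro i h
    have h' : i + 1 = i + 0 := by rw [add_zero]; exact winj h
    exact hone0 (add_left_cancel h')
  obtain ⟨N, hN⟩ := hbd
  letI TT := modVarTop k (BoundAlg k V R) (m' + 2)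
  letI := zariskiTop k Unit
  set f₀ := Phi R w ar 0 (hne 0) k (0 : k) with hf₀
  have hcomp := hirr (m' + 2) f₀
  -- membership of the curves in the connected component
  have hcurve_mem : ∀ i₀ : Fin (m' + 2), ∀ x : Unit → k,
      curve R w ar i₀ (hne i₀) x ∈ connectedComponent f₀ := by
    intro i₀ x
    have hpre : IsPreconnected (Set.range (curve R w ar i₀ (hne i₀))) := by
      rw [← Set.image_univ]
      exact IsPreconnected.image
        (zariski_unit_preconnected (k := k))
        _ ((curve_continuous R w ar i₀ (hne i₀)).continuousOn)
    have hf₀mem : f₀ ∈ Set.range (curve R w ar i₀ (hne i₀)) := by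
      refine ⟨(fun _ => 0), ?_⟩
      simp only [curve]
      exact Phi_zero_indep R w ar i₀ (hne i₀) 0 (hne 0)
    exact hpre.subset_connectedComponent hf₀mem ⟨x, rfl⟩
  -- the opens
  have hopen1 : ∀ i : Fin (m' + 2), IsOpen {f : BoundAlg k V R →ₐ[k] Matrix (Fin (m' + 2)) (Fin (m' + 2)) k |
      f (Aelem R (ar i)) ≠ 0} := fun i => isOpen_apply_ne (k := k) (A := BoundAlg k V R) (n := m' + 2) _
  have hopen2 : ∀ j : Fin (m' + 2), IsOpen {f : BoundAlg k V R →ₐ[k] Matrix (Fin (m' + 2)) (Fin (m' + 2)) k |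
      f (Ev R (w j)) ≠ 0} := fun j => isOpen_apply_ne (k := k) (A := BoundAlg k V R) (n := m' + 2) _
  set Uf : Fin (m' + 2) ⊕ Fin (m' + 2) → Set (BoundAlg k V R →ₐ[k] Matrix (Fin (m' + 2)) (Fin (m' + 2)) k) :=
    fun z => Sum.rec (fun i => {f | f (Aelem R (ar i)) ≠ 0}) (fun j => {f | f (Ev R (w j)) ≠ 0}) z
    with hUf
  have hUfopen : ∀ z, IsOpen (Uf z) := by
    rintro (i | j)
    · exact hopen1 i
    · exact hopen2 j
  have hUfne : ∀ z, (connectedComponent f₀ ∩ Uf z).Nonempty := by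
    rintro (i | j)
    · refine ⟨curve R w ar i (hne i) (fun _ => 1), hcurve_mem i _, ?_⟩
      show curve R w ar i (hne i) (fun _ => 1) (Aelem R (ar i)) ≠ 0
      simp only [curve]
      rw [Phi_Aelem_self]
      intro h
      have h2 : (Matrix.single (i + 1) i (1:k)) (i + 1) i = 0 := by rw [h]; rfl
      rw [Matrix.single_apply_same] at h2
      exact one_ne_zero h2
    · refine ⟨f₀, mem_connectedComponent, ?_⟩
      show f₀ (Ev R (w j)) ≠ 0
      rw [hf₀, Phi_Ev]
      intro h
      have h2 : (Dm w k (w j) : Matrix (Fin (m' + 2)) (Fin (m' + 2)) k) j j = 0 := by rw [h]; rfl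
      simp [Dm] at h2
  obtain ⟨f, hfcomp, hfU⟩ := preirr_inter_finset hcomp Finset.univ Uf hUfopen hUfne
  have hfU' : ∀ z : Fin (m' + 2) ⊕ Fin (m' + 2), f ∈ Uf z := by
    intro z
    have := Set.mem_iInter₂.1 hfU z (Finset.mem_univ z)
    exact this
  have hM : ∀ i : Fin (m' + 2), f (Aelem R (ar i)) ≠ 0 := fun i => hfU' (Sum.inl i)
  have hP : ∀ j : Fin (m' + 2), f (Ev R (w j)) ≠ 0 := fun j => hfU' (Sum.inr j)
  -- the contradiction
  refine matrix_contra (fun j => f (Ev R (w j))) (fun i => f (Aelem R (ar i)))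
    (fun j => ?_) (fun j j' hjj => ?_) hP hM (fun i => ?_) (fun i => ?_)
    (fun t => f (baMk k V R (pathElem k V (chain w ar t)))) ?_ (fun t => ?_) N ?_
  · rw [← map_mul, Ev_mul_Ev]
  · rw [← map_mul, Ev_orth _ _ _ (fun h => hjj (winj h)), map_zero]
  · rw [← map_mul, Ev_mul_Aelem]
  · rw [← map_mul, Aelem_mul_Ev]
  · show f (baMk k V R (pathElem k V (chain w ar 0))) = f (Ev R (w 0))
    rw [pathElem_chain_zero]
    rfl
  · show f (baMk k V R (pathElem k V (chain w ar (t + 1))))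
        = f (Aelem R (ar ((t : ℕ) : Fin (m' + 2)))) * f (baMk k V R (pathElem k V (chain w ar t)))
    rw [pathElem_chain_succ, map_mul, map_mul]
    rfl
  · show f (baMk k V R (pathElem k V (chain w ar N))) = 0
    rw [hN _ _ _ (le_of_eq (chain_length w ar N).symm), map_zero]
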